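/- Let u and v be finite words with |v| < |u|, not powers of a common word, such that v is a suffix of u, and let s be the maximal common suffix of the left-infinite words v^∞ and v^∞u. Then s is a suffix of every left-infinite concatenation of u and v. -/

import Mathlib

/-- `wordPow v n` is the word `v` repeated `n` times. -/
def wordPow {A : Type*} (v : List A) (n : ℕ) : List A := (List.replicate n v).flatten

/-- A finite word `z` is a suffix of the left-infinite word `x`, where `x i` denotes the
letter `i` positions from the right end of `x`. -/
def IsSuffixOfLeftInf {A : Type*} (z : List A) (x : ℕ → A) : Prop :=
  ∀ i : Fin z.length, z.get ⟨z.length - 1 - (i : ℕ), by have := i.isLt; omega⟩ = x i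

section Aux

variable {A : Type*}

lemma wordPow_succ (z : List A) (n : ℕ) : wordPow z (n+1) = z ++ wordPow z n := by
  simp [wordPow, List.replicate_succ]

lemma wordPow_one (z : List A) : wordPow z 1 = z := by simp [wordPow]

lemma wordPow_add (z : List A) (m n : ℕ) : wordPow z (m+n) = wordPow z m ++ wordPow z n := by
  rw [wordPow, List.replicate_add, List.flatten_append]; rfl

lemma wordPow_succ' (z : List A) (n : ℕ) : wordPow z (n+1) = wordPow z n ++ z := by
  rw [wordPow_add, wordPow_one]

lemma length_wordPow (z : List A) (n : ℕ) : (wordPow z n).length = n * z.length := by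
  simp [wordPow, Nat.mul_comm]

lemma reverse_wordPow (z : List A) (n : ℕ) : (wordPow z n).reverse = wordPow z.reverse n := by
  induction n with
  | zero => simp [wordPow]
  | succ n ih => rw [wordPow_succ, List.reverse_append, ih, wordPow_succ']

lemma suffix_append_right {a b : List A} (c : List A) (h : a <:+ b) : a ++ c <:+ b ++ c := by
  obtain ⟨d, rfl⟩ := h; exact ⟨d, (List.append_assoc _ _ _).symm⟩

lemma getElem_wordPow (z : List A) (hz : 0 < z.length) (n i : ℕ) (hi : i < n * z.length) :
    (wordPow z n)[i]'(by rw [length_wordPow]; exact hi) = z[i % z.length]'(Nat.mod_lt _ hz) := by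
  induction n generalizing i with
  | zero => omega
  | succ n ih =>
    rw [List.getElem_of_eq (wordPow_succ z n) _]
    rcases Nat.lt_or_ge i z.length with h | h
    · rw [List.getElem_append_left h]
      congr 1
      exact (Nat.mod_eq_of_lt h).symm
    · have h2 : i - z.length < n * z.length := by
        have : (n+1) * z.length = n * z.length + z.length := by ring
        omega
      rw [List.getElem_append_right h]
      have := ih (i - z.length) h2
      rw [this]
      congr 1
      conv_rhs => rw [show i = z.length + (i - z.length) by omega]
      rw [Nat.add_mod_left]

lemma period_mul (f : ℕ → A) (a : ℕ) (h : ∀ i, f (i + a) = f i) (k : ℕ) :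
    ∀ i, f (i + k * a) = f i := by
  induction k with
  | zero => simp
  | succ k ih =>
    intro i
    have : i + (k+1) * a = (i + k * a) + a := by ring
    rw [this, h, ih]

lemma period_gcd (f : ℕ → A) : ∀ a b, (∀ i, f (i + a) = f i) → (∀ i, f (i + b) = f i) →
    ∀ i, f (i + Nat.gcd a b) = f i := by
  intro a
  induction a using Nat.strong_induction_on with
  | _ a ih =>
    intro b ha hb i
    rcases Nat.eq_zero_or_pos a with rfl | hpos
    · rw [Nat.gcd_zero_left]; exact hb i
    · rw [Nat.gcd_rec]
      refine ih (b % a) (Nat.mod_lt _ hpos) a (fun j => ?_) ha i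
      have h1 : j + b % a + (b / a) * a = j + b := by
        rw [Nat.mul_comm]; have := Nat.div_add_mod b a; omega
      have := period_mul f a ha (b / a) (j + b % a)
      rw [h1] at this
      rw [← this, hb]

lemma rev_getElem_of_suffix {s M : List A} (h : s <:+ M) (i : ℕ) (hi : i < s.length) :
    s.reverse[i]'(by simpa using hi) =
      M.reverse[i]'(by simp; exact lt_of_lt_of_le hi h.length_le) := by
  obtain ⟨a, rfl⟩ := h
  rw [List.getElem_of_eq (@List.reverse_append _ a s) _, List.getElem_append_left (by simpa using hi)]

lemma stepA {x : ℕ → A} {L s : List A} (h : s <:+ L) (hL : IsSuffixOfLeftInf L x) :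
    IsSuffixOfLeftInf s x := by
  intro i
  have hi : (i : ℕ) < L.length := lt_of_lt_of_le i.isLt h.length_le
  have h2 := hL ⟨i, hi⟩
  simp only [List.get_eq_getElem] at h2 ⊢
  rw [← List.getElem_reverse (l := s) (i := (i : ℕ)) (by simpa using i.isLt)]
  rw [← List.getElem_reverse (l := L) (i := (i : ℕ)) (by simpa using hi)] at h2
  rw [rev_getElem_of_suffix h i i.isLt]
  exact h2

lemma W_succ (w : ℕ → List A) (k : ℕ) :
    ((List.range (k+1)).reverse.map w).flatten = w k ++ ((List.range k).reverse.map w).flatten := by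
  rw [List.range_succ]; simp

lemma Wv (w : ℕ → List A) (v : List A) (k : ℕ) (h : ∀ j < k, w j = v) :
    ((List.range k).reverse.map w).flatten = wordPow v k := by
  induction k with
  | zero => simp [wordPow]
  | succ k ih =>
    rw [W_succ, h k (Nat.lt_succ_self k), ih (fun j hj => h j (hj.trans (Nat.lt_succ_self k))),
      wordPow_succ]

lemma bound_lemma (u v s : List A) (hv : v ≠ []) (hlen : v.length < u.length)
    (hnc : ¬ ∃ (t : List A) (m m' : ℕ), 1 ≤ m ∧ 1 ≤ m' ∧
      u = wordPow t m ∧ v = wordPow t m')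
    (hs1 : ∃ n : ℕ, s <:+ wordPow v n)
    (hs2 : ∃ n : ℕ, s <:+ wordPow v n ++ u) :
    s.length ≤ u.length + v.length := by
  by_contra hcon
  push_neg at hcon
  have hL : 0 < v.length := List.length_pos_iff.mpr hv
  have hU : 0 < u.length := by omega
  set f : ℕ → A := fun i => v.reverse[i % v.length]'(by simpa using Nat.mod_lt i hL) with hf
  have hperL : ∀ i, f (i + v.length) = f i := by intro i; simp [hf, Nat.add_mod_right]
  obtain ⟨n, hn⟩ := hs1
  obtain ⟨n', hn'⟩ := hs2
  have hslen : s.length ≤ n * v.length := by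
    have := hn.length_le; rwa [length_wordPow] at this
  have hslen' : s.length ≤ n' * v.length + u.length := by
    have := hn'.length_le; rw [List.length_append, length_wordPow] at this; omega
  -- letters of s from the right are given by f
  have hsf : ∀ i (hi : i < s.length), s.reverse[i]'(by simpa using hi) = f i := by
    intro i hi
    rw [rev_getElem_of_suffix hn i hi, List.getElem_of_eq (reverse_wordPow v n) _,
      getElem_wordPow v.reverse (by simpa using hL) n i (by simp only [List.length_reverse]; omega)]
    simp only [List.length_reverse, hf]
  -- letters of u from the right are given by f
  have huf : ∀ i (hi : i < u.length), u.reverse[i]'(by simpa using hi) = f i := by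
    intro i hi
    have h1 := rev_getElem_of_suffix hn' i (by omega)
    rw [List.getElem_of_eq List.reverse_append _,
      List.getElem_append_left (by simpa using hi)] at h1
    rw [← h1, hsf i (by omega)]
  -- partial period u.length
  have hn'L : v.length ≤ n' * v.length := by
    rcases Nat.eq_zero_or_pos n' with rfl | hp
    · simp at hslen'; omega
    · calc v.length = 1 * v.length := (Nat.one_mul v.length).symm
        _ ≤ n' * v.length := Nat.mul_le_mul_right v.length hp
  have hstep : ∀ j, j < v.length → f (j + u.length) = f j := by
    intro j hj
    have hi : j + u.length < s.length := by omega
    have h1 := hsf (j + u.length) hi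
    have h2 := rev_getElem_of_suffix hn' (j + u.length) hi
    rw [List.getElem_of_eq List.reverse_append _,
      List.getElem_append_right (by simp only [List.length_reverse]; omega)] at h2
    simp only [List.length_reverse, Nat.add_sub_cancel] at h2
    rw [List.getElem_of_eq (reverse_wordPow v n') _,
      getElem_wordPow v.reverse (by simpa using hL) n' j
        (by simp only [List.length_reverse]; omega)] at h2
    rw [← h1, h2]
    simp only [List.length_reverse, hf]
  -- full period u.length
  have hperU : ∀ i, f (i + u.length) = f i := by
    intro i
    have e1 : i = i % v.length + (i / v.length) * v.length := by
      rw [Nat.mul_comm]; have := Nat.div_add_mod i v.length; omega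
    calc f (i + u.length) = f (i % v.length + u.length + (i / v.length) * v.length) := by
          congr 1; omega
      _ = f (i % v.length + u.length) := period_mul f v.length hperL (i / v.length) _
      _ = f (i % v.length) := hstep _ (Nat.mod_lt _ hL)
      _ = f (i % v.length + (i / v.length) * v.length) :=
          (period_mul f v.length hperL (i / v.length) _).symm
      _ = f i := by congr 1; omega
  -- period gcd
  set g := Nat.gcd u.length v.length with hgdef
  have hgper : ∀ i, f (i + g) = f i := period_gcd f u.length v.length hperU hperL
  have hgdvdU : g ∣ u.length := Nat.gcd_dvd_left _ _
  have hgdvdL : g ∣ v.length := Nat.gcd_dvd_right _ _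
  have hgpos : 0 < g := Nat.gcd_pos_of_pos_right _ hL
  have hfmod : ∀ i, f i = f (i % g) := by
    intro i
    have e1 : i = i % g + (i / g) * g := by
      rw [Nat.mul_comm]; have := Nat.div_add_mod i g; omega
    have h := period_mul f g hgper (i / g) (i % g)
    rw [← e1] at h
    exact h
  set tr : List A := List.ofFn (fun j : Fin g => f j) with htr
  have htrlen : tr.length = g := by simp [htr]
  have key : ∀ (z : List A) (m : ℕ), z.length = m * g →
      (∀ i (hi : i < z.length), z.reverse[i]'(by simpa using hi) = f i) →
      z = wordPow tr.reverse m := by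
    intro z m hzl hzf
    have hrev : z.reverse = wordPow tr m := by
      apply List.ext_getElem
      · simp [length_wordPow, htrlen, hzl]
      · intro i h1 h2
        rw [hzf i (by simpa using h1)]
        rw [length_wordPow, htrlen] at h2
        rw [getElem_wordPow tr (by rw [htrlen]; exact hgpos) m i (by rw [htrlen]; exact h2)]
        simp only [htrlen, htr, List.getElem_ofFn, List.length_ofFn]
        exact hfmod i
    calc z = z.reverse.reverse := (List.reverse_reverse z).symm
      _ = (wordPow tr m).reverse := by rw [hrev]
      _ = wordPow tr.reverse m := reverse_wordPow tr m
  have hvf : ∀ i (hi : i < v.length), v.reverse[i]'(by simpa using hi) = f i := by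
    intro i hi
    simp only [hf, Nat.mod_eq_of_lt hi]
  have hveq : v = wordPow tr.reverse (v.length / g) :=
    key v (v.length / g) (by rw [Nat.div_mul_cancel hgdvdL]) hvf
  have hueq : u = wordPow tr.reverse (u.length / g) :=
    key u (u.length / g) (by rw [Nat.div_mul_cancel hgdvdU]) huf
  exact hnc ⟨tr.reverse, u.length / g, v.length / g,
    Nat.div_pos (Nat.le_of_dvd hU hgdvdU) hgpos,
    Nat.div_pos (Nat.le_of_dvd hL hgdvdL) hgpos, hueq, hveq⟩

end Aux

/-- If `v` is a suffix of `u`, `|v| < |u|`, `u` and `v` are not powers of a common word, and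
`s` is the maximal common suffix of `v^∞` and `v^∞u`, then `s` is a suffix of every
left-infinite concatenation of `u` and `v`. -/
theorem stmt19 {A : Type*} (u v s : List A) (hv : v ≠ []) (hu : u ≠ [])
    (hlen : v.length < u.length)
    (hnc : ¬ ∃ (t : List A) (m m' : ℕ), 1 ≤ m ∧ 1 ≤ m' ∧
      u = wordPow t m ∧ v = wordPow t m')
    (hsuf : v <:+ u)
    (hs1 : ∃ n : ℕ, s <:+ wordPow v n)
    (hs2 : ∃ n : ℕ, s <:+ wordPow v n ++ u)
    (hmax : ∀ s' : List A, (∃ n : ℕ, s' <:+ wordPow v n) →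
      (∃ n : ℕ, s' <:+ wordPow v n ++ u) → s'.length ≤ s.length)
    (x : ℕ → A) (w : ℕ → List A) (hw : ∀ i : ℕ, w i = u ∨ w i = v)
    (hx : ∀ k : ℕ, IsSuffixOfLeftInf (((List.range k).reverse.map w).flatten) x) :
    IsSuffixOfLeftInf s x := by
  classical
  have hbound : s.length ≤ u.length + v.length := bound_lemma u v s hv hlen hnc hs1 hs2
  by_cases hex : ∃ j, w j = u
  · -- there is a block equal to u; take the first one
    have hk : w (Nat.find hex) = u := Nat.find_spec hex
    set k := Nat.find hex with hkdef
    have hkmin : ∀ j < k, w j = v := fun j hj => (hw j).resolve_left (Nat.find_min hex hj)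
    have hWk : ((List.range k).reverse.map w).flatten = wordPow v k := Wv w v k hkmin
    have hWk2 : ((List.range (k+2)).reverse.map w).flatten = w (k+1) ++ (u ++ wordPow v k) := by
      rw [show k + 2 = (k + 1) + 1 by rfl, W_succ, W_succ, hk, hWk]
    obtain ⟨n', hn'⟩ := hs2
    have hn'1 : s <:+ wordPow v (n'+1) ++ u :=
      hn'.trans (suffix_append_right u ⟨v, (wordPow_succ v n').symm⟩)
    have hsv : s <:+ s ++ wordPow v k := by
      obtain ⟨n, hn⟩ := hs1
      have h1 : s ++ wordPow v k <:+ wordPow v (n+k) := by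
        rw [wordPow_add]; exact suffix_append_right _ hn
      have h2 : s <:+ wordPow v (n+k) :=
        hn.trans ⟨wordPow v k, by rw [← wordPow_add, Nat.add_comm]⟩
      exact List.suffix_of_suffix_length_le h2 h1 (by simp)
    have h1 : s <:+ (wordPow v (n'+1) ++ u) ++ wordPow v k :=
      hsv.trans (suffix_append_right _ hn'1)
    have h2 : v ++ (u ++ wordPow v k) <:+ (wordPow v (n'+1) ++ u) ++ wordPow v k := by
      have ha : v ++ u <:+ wordPow v (n'+1) ++ u :=
        suffix_append_right u ⟨wordPow v n', (wordPow_succ' v n').symm⟩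
      have hb := suffix_append_right (wordPow v k) ha
      rwa [List.append_assoc v u _] at hb
    have h3 : s <:+ v ++ (u ++ wordPow v k) := by
      refine List.suffix_of_suffix_length_le h1 h2 ?_
      simp only [List.length_append, length_wordPow]
      have : 0 ≤ k * v.length := Nat.zero_le _
      omega
    have h4 : v <:+ w (k+1) := by
      rcases hw (k+1) with h | h
      · rw [h]; exact hsuf
      · rw [h]
    have h5 : s <:+ w (k+1) ++ (u ++ wordPow v k) := h3.trans (suffix_append_right _ h4)
    exact stepA (hWk2 ▸ h5) (hx (k+2))
  · -- all blocks are v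
    push_neg at hex
    obtain ⟨n, hn⟩ := hs1
    have hall : ∀ j < n, w j = v := fun j _ => (hw j).resolve_left (hex j)
    have hWn : ((List.range n).reverse.map w).flatten = wordPow v n := Wv w v n hall
    exact stepA (hWn ▸ hn) (hx n)
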